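/- There exists a constant c > 0, depending only on φ₀, such that for every ψ satisfying (Ψ), every integer j ≤ −2, and every ξ ∈ ℝ² with 2^{j−1} ≤ |ξ| ≤ 2^{j+1}, one has (4π·2^{2j})^{-1} ∫_{ℝ²} exp(−|ξ−η|²/(4·2^{2j})) φ̂₀(2^{-j}η) (1 − η₂²/|η|²) (η₂²/|η|³) (ψ̂ * ψ̂)(η) dη ≥ c · 2^{-j}. -/

import Mathlib

open MeasureTheory Filter Complex SchwartzMap
open scoped ENNReal Topology FourierTransform

noncomputable section

/-- The plane `ℝ²`. -/
abbrev Plane := EuclideanSpace ℝ (Fin 2)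

/-- The Fourier transform on `ℝ²`. -/
def FT (f : Plane → ℂ) : Plane → ℂ := 𝓕 f

/-- The inverse Fourier transform on `ℝ²`. -/
def FTinv (f : Plane → ℂ) : Plane → ℂ := 𝓕⁻ f

/-- Partial derivative `∂_{x_m}`. -/
def pd (m : Fin 2) (f : Plane → ℂ) : Plane → ℂ :=
  fun x => fderiv ℝ f x (EuclideanSpace.single m (1:ℝ))

/-- `φ₀` generates a homogeneous Littlewood–Paley decomposition: its Fourier transform is
real-valued with `0 ≤ φ̂₀ ≤ 1`, supported in the annulus `{1/2 ≤ |ξ| ≤ 2}`, and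
`Σ_{j∈ℤ} φ̂₀(2^{-j} ξ) = 1` for `ξ ≠ 0`. -/
structure IsLP (φ0 : 𝓢(Plane, ℂ)) : Prop where
  im_zero : ∀ ξ, (FT φ0 ξ).im = 0
  nonneg : ∀ ξ, 0 ≤ (FT φ0 ξ).re
  le_one : ∀ ξ, (FT φ0 ξ).re ≤ 1
  support : ∀ ξ, FT φ0 ξ ≠ 0 → 1/2 ≤ ‖ξ‖ ∧ ‖ξ‖ ≤ 2
  partition : ∀ ξ : Plane, ξ ≠ 0 → HasSum (fun j : ℤ => FT φ0 ((2:ℝ)^(-j) • ξ)) 1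

/-- The Littlewood–Paley block `Δ_j f = F⁻¹[φ̂₀(2^{-j}·) F[f]]`. -/
def LP (φ0 : 𝓢(Plane, ℂ)) (j : ℤ) (f : Plane → ℂ) : Plane → ℂ :=
  FTinv (fun ξ => FT φ0 ((2:ℝ)^(-j) • ξ) * FT f ξ)

/-- The homogeneous Besov norm `‖f‖_{Ḃ^s_{p,q}}` (with values in `ℝ≥0∞`). -/
def besov (φ0 : 𝓢(Plane, ℂ)) (s : ℝ) (p q : ℝ≥0∞) (f : Plane → ℂ) : ℝ≥0∞ :=
  if q = ∞ then ⨆ j : ℤ, (2:ℝ≥0∞) ^ (s * (j:ℝ)) * eLpNorm (LP φ0 j f) p volume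
  else (∑' j : ℤ, ((2:ℝ≥0∞) ^ (s * (j:ℝ)) * eLpNorm (LP φ0 j f) p volume) ^ q.toReal)
        ^ (1/q.toReal)

/-- Besov norm of a vector field (sum of the norms of the components). -/
def besovVec (φ0 : 𝓢(Plane, ℂ)) (s : ℝ) (p q : ℝ≥0∞) (u : Fin 2 → Plane → ℂ) : ℝ≥0∞ :=
  ∑ m : Fin 2, besov φ0 s p q (u m)

/-- `L^p` norm of a vector field (sum of the norms of the components). -/
def lpVec (p : ℝ≥0∞) (u : Fin 2 → Plane → ℂ) : ℝ≥0∞ :=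
  ∑ m : Fin 2, eLpNorm (u m) p volume

/-- The tensor product `u ⊗ v` of two vector fields. -/
def tens (u v : Fin 2 → Plane → ℂ) : Fin 2 → Fin 2 → Plane → ℂ :=
  fun k l x => u k x * v l x

/-- The divergence of a matrix field. -/
def divMat (F : Fin 2 → Fin 2 → Plane → ℂ) : Fin 2 → Plane → ℂ :=
  fun m x => ∑ l : Fin 2, pd l (F m l) x

/-- `∇^⊥ f = (-∂_{x₂} f, ∂_{x₁} f)`. -/
def perpGrad (f : Plane → ℂ) : Fin 2 → Plane → ℂ :=
  ![fun x => -(pd 1 f x), pd 0 f]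

/-- A vector field is divergence free. -/
def DivFree (u : Fin 2 → Plane → ℂ) : Prop :=
  ∀ x, ∑ m : Fin 2, pd m (u m) x = 0

/-- A vector field is real valued. -/
def RealValued (u : Fin 2 → Plane → ℂ) : Prop :=
  ∀ m x, (u m x).im = 0

/-- The operator `(-Δ)⁻¹ ℙ div` applied to a matrix field `F`, defined on the Fourier side:
the `m`-th component is the inverse Fourier transform of
`ξ ↦ |ξ|⁻² Σ_{k,l} (δ_{mk} - ξ_m ξ_k |ξ|⁻²) i ξ_l F[F_{kl}](ξ)`. -/
def invLapPdiv (F : Fin 2 → Fin 2 → Plane → ℂ) : Fin 2 → Plane → ℂ :=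
  fun m => FTinv (fun ξ =>
    ((((‖ξ‖^2 : ℝ) : ℂ))⁻¹) * ∑ k : Fin 2, ∑ l : Fin 2,
      (((if m = k then (1:ℂ) else 0) - ((ξ m * ξ k : ℝ) : ℂ) / ((‖ξ‖^2 : ℝ) : ℂ))
        * (Complex.I * ((ξ l : ℝ) : ℂ)) * FT (F k l) ξ))

/-- `ψ` satisfies condition (Ψ): its Fourier transform is radial, real-valued with values
in `[0,1]`, supported in `{|ξ| ≤ 2}` and equal to `1` on `{|ξ| ≤ 1}`. -/
structure IsPsi (ψ : 𝓢(Plane, ℂ)) : Prop where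
  radial : ∀ ξ η : Plane, ‖ξ‖ = ‖η‖ → FT ψ ξ = FT ψ η
  im_zero : ∀ ξ, (FT ψ ξ).im = 0
  nonneg : ∀ ξ, 0 ≤ (FT ψ ξ).re
  le_one : ∀ ξ, (FT ψ ξ).re ≤ 1
  support : ∀ ξ, FT ψ ξ ≠ 0 → ‖ξ‖ ≤ 2
  eq_one : ∀ ξ : Plane, ‖ξ‖ ≤ 1 → FT ψ ξ = 1

/-- The vector field `(0, ∂_{x₂}(ψ²))ᵀ`. -/
def vecPsiSq (ψ : 𝓢(Plane, ℂ)) : Fin 2 → Plane → ℂ :=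
  ![fun _ => 0, pd 1 (fun x => (ψ x)^2)]

/-- The vector field `(-Δ)⁻¹ ℙ (0, ∂_{x₂}(ψ²))ᵀ`, defined on the Fourier side: its `m`-th
component is the inverse Fourier transform of
`ξ ↦ (δ_{m2} - ξ_m ξ₂ |ξ|⁻²) i ξ₂ |ξ|⁻² F[ψ²](ξ)`. -/
def invLapPVecPsiSq (ψ : 𝓢(Plane, ℂ)) : Fin 2 → Plane → ℂ :=
  fun m => FTinv (fun ξ =>
    ((if m = (1 : Fin 2) then (1:ℂ) else 0) - ((ξ m * ξ 1 : ℝ) : ℂ) / ((‖ξ‖^2 : ℝ) : ℂ))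
      * (Complex.I * ((ξ 1 : ℝ) : ℂ)) * ((((‖ξ‖^2 : ℝ) : ℂ))⁻¹)
      * FT (fun x => (ψ x)^2) ξ)

/-- `‖∇ψ‖²_{L²(ℝ²)}`. -/
def gradL2sq (ψ : Plane → ℂ) : ℝ :=
  ∫ x : Plane, (‖pd 0 ψ x‖^2 + ‖pd 1 ψ x‖^2)

lemma FT_continuous (f : 𝓢(Plane, ℂ)) : Continuous (FT f) := by
  have : FT f = ⇑(fourierTransformCLM ℂ f) := by
    rw [fourierTransformCLM_apply]; rfl
  rw [this]
  exact (fourierTransformCLM ℂ f).continuous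

variable {ψ : 𝓢(Plane, ℂ)}

lemma conv_integrand_integrable (hψ : IsPsi ψ) (η : Plane) :
    Integrable (fun θ => FT ψ (η - θ) * FT ψ θ) := by
  apply Continuous.integrable_of_hasCompactSupport
  · exact ((FT_continuous ψ).comp (continuous_const.sub continuous_id)).mul (FT_continuous ψ)
  · apply HasCompactSupport.of_support_subset_isCompact (isCompact_closedBall (0:Plane) 2)
    intro θ hθ
    simp only [Function.mem_support] at hθ
    have : FT ψ θ ≠ 0 := fun h => hθ (by rw [h, mul_zero])
    simpa using hψ.support θ this

lemma mul_re_of_im_zero (hψ : IsPsi ψ) (η θ : Plane) :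
    (FT ψ (η - θ) * FT ψ θ).re = (FT ψ (η - θ)).re * (FT ψ θ).re := by
  rw [Complex.mul_re, hψ.im_zero, hψ.im_zero]
  ring

lemma conv_re_integrable (hψ : IsPsi ψ) (η : Plane) :
    Integrable (fun θ => (FT ψ (η - θ)).re * (FT ψ θ).re) := by
  have h := (conv_integrand_integrable hψ η).re
  simp only [RCLike.re_to_complex, mul_re_of_im_zero hψ] at h
  exact h

lemma conv_re_eq (hψ : IsPsi ψ) (η : Plane) :
    (∫ θ : Plane, FT ψ (η - θ) * FT ψ θ).re
      = ∫ θ : Plane, (FT ψ (η - θ)).re * (FT ψ θ).re := by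
  have h := integral_re (conv_integrand_integrable hψ η)
  simp only [RCLike.re_to_complex, mul_re_of_im_zero hψ] at h
  exact h.symm

lemma conv_nonneg (hψ : IsPsi ψ) (η : Plane) :
    0 ≤ (∫ θ : Plane, FT ψ (η - θ) * FT ψ θ).re := by
  rw [conv_re_eq hψ]
  apply integral_nonneg
  intro θ
  exact mul_nonneg (hψ.nonneg _) (hψ.nonneg _)

lemma conv_lower (hψ : IsPsi ψ) (η : Plane) (hη : ‖η‖ ≤ 7/8) :
    (volume (Metric.ball (0:Plane) (1/8))).toReal
      ≤ (∫ θ : Plane, FT ψ (η - θ) * FT ψ θ).re := by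
  rw [conv_re_eq hψ]
  have step1 : ∫ θ in Metric.ball (0:Plane) (1/8), (FT ψ (η - θ)).re * (FT ψ θ).re
      ≤ ∫ θ : Plane, (FT ψ (η - θ)).re * (FT ψ θ).re := by
    apply setIntegral_le_integral (conv_re_integrable hψ η)
    filter_upwards with θ
    exact mul_nonneg (hψ.nonneg _) (hψ.nonneg _)
  refine le_trans ?_ step1
  have h1 : (1:ℝ) * (volume (Metric.ball (0:Plane) (1/8))).toReal
      ≤ ∫ θ in Metric.ball (0:Plane) (1/8), (FT ψ (η - θ)).re * (FT ψ θ).re := by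
    show (1:ℝ) * volume.real (Metric.ball (0:Plane) (1/8)) ≤ _
    apply setIntegral_ge_of_const_le_real measurableSet_ball measure_ball_lt_top.ne
    · intro θ hθ
      rw [Metric.mem_ball, dist_zero_right] at hθ
      have e1 : FT ψ θ = 1 := hψ.eq_one θ (by linarith)
      have e2 : FT ψ (η - θ) = 1 := by
        apply hψ.eq_one
        calc ‖η - θ‖ ≤ ‖η‖ + ‖θ‖ := norm_sub_le _ _
        _ ≤ 1 := by linarith
      rw [e1, e2]; norm_num
    · exact (conv_re_integrable hψ η).integrableOn
  linarith
lemma conv_upper (hψ : IsPsi ψ) (η : Plane) :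
    (∫ θ : Plane, FT ψ (η - θ) * FT ψ θ).re
      ≤ (volume (Metric.closedBall (0:Plane) 2)).toReal := by
  rw [conv_re_eq hψ]
  have : ∫ θ : Plane, (FT ψ (η - θ)).re * (FT ψ θ).re
      ≤ ∫ θ : Plane, (Metric.closedBall (0:Plane) 2).indicator (fun _ => (1:ℝ)) θ := by
    apply integral_mono (conv_re_integrable hψ η)
    · rw [integrable_indicator_iff measurableSet_closedBall]
      exact integrableOn_const measure_closedBall_lt_top.ne
    · intro θ
      by_cases hθ : θ ∈ Metric.closedBall (0:Plane) 2
      · rw [Set.indicator_of_mem hθ]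
        show (FT ψ (η - θ)).re * (FT ψ θ).re ≤ 1
        have := hψ.le_one (η - θ); have := hψ.le_one θ
        have := hψ.nonneg (η - θ); have := hψ.nonneg θ
        nlinarith
      · rw [Set.indicator_of_notMem hθ]
        show (FT ψ (η - θ)).re * (FT ψ θ).re ≤ 0
        have : FT ψ θ = 0 := by
          by_contra h
          exact hθ (by simpa [Metric.mem_closedBall, dist_zero_right] using hψ.support θ h)
        rw [this]; simp
  refine le_trans this ?_
  rw [integral_indicator_const _ measurableSet_closedBall]
  simp only [smul_eq_mul, mul_one]; exact le_rfl

lemma conv_re_measurable (hψ : IsPsi ψ) :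
    StronglyMeasurable (fun η : Plane => (∫ θ : Plane, FT ψ (η - θ) * FT ψ θ).re) := by
  have h : StronglyMeasurable (fun q : Plane × Plane => FT ψ (q.1 - q.2) * FT ψ q.2) := by
    apply Continuous.stronglyMeasurable
    exact ((FT_continuous ψ).comp (continuous_fst.sub continuous_snd)).mul
      ((FT_continuous ψ).comp continuous_snd)
  exact Complex.continuous_re.comp_stronglyMeasurable h.integral_prod_right'

lemma vol_ball_toReal (x : Plane) (R : ℝ) (hR : 0 ≤ R) :
    (volume (Metric.ball x R)).toReal = Real.pi * R^2 := by
  rw [EuclideanSpace.volume_ball]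
  have h1 : Real.Gamma ((Fintype.card (Fin 2)) / 2 + 1) = 1 := by
    norm_num [Real.Gamma_two]
  have h2 : Real.sqrt Real.pi ^ (Fintype.card (Fin 2)) = Real.pi := by
    simp [Real.sq_sqrt Real.pi_pos.le]
  rw [h1, h2]
  rw [← ENNReal.ofReal_pow hR, ← ENNReal.ofReal_mul (by positivity)]
  rw [ENNReal.toReal_ofReal (by positivity)]
  norm_num [mul_comm]

lemma vol_ball_pos (x : Plane) (R : ℝ) (hR : 0 < R) :
    0 < (volume (Metric.ball x R)).toReal := by
  rw [vol_ball_toReal x R hR.le]; positivity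

lemma plane_norm_sq (η : Plane) : ‖η‖^2 = (η 0)^2 + (η 1)^2 := by
  rw [EuclideanSpace.norm_eq, Real.sq_sqrt (by positivity)]
  simp [Fin.sum_univ_two, Real.norm_eq_abs, _root_.sq_abs]

lemma plane_abs_apply_le (η : Plane) (i : Fin 2) : |η i| ≤ ‖η‖ := by
  have h := plane_norm_sq η
  have h2 : (η i)^2 ≤ ‖η‖^2 := by
    fin_cases i <;> simp <;> nlinarith [sq_nonneg (η 0), sq_nonneg (η 1)]
  calc |η i| = Real.sqrt ((η i)^2) := (Real.sqrt_sq_eq_abs _).symm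
  _ ≤ Real.sqrt (‖η‖^2) := Real.sqrt_le_sqrt h2
  _ = ‖η‖ := Real.sqrt_sq (norm_nonneg η)

lemma plane_apply_continuous (i : Fin 2) : Continuous (fun η : Plane => η i) :=
  (EuclideanSpace.proj (𝕜 := ℝ) i).continuous

lemma exists_good_point (φ0 : 𝓢(Plane, ℂ)) (hφ0 : IsLP φ0) :
    ∃ p : Plane, 1/4 ≤ p 0 ∧ 1/4 ≤ p 1 ∧ ‖p‖ ≤ 2 ∧ 1/3 ≤ (FT φ0 p).re := by
  set s : ℝ := Real.sqrt 2 / 2 with hs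
  have hs2 : s^2 = 1/2 := by
    rw [hs, div_pow, Real.sq_sqrt (by norm_num : (0:ℝ) ≤ 2)]; norm_num
  have hs_half : 1/2 ≤ s := by
    rw [hs]
    nlinarith [Real.sq_sqrt (by norm_num : (0:ℝ) ≤ 2), Real.sqrt_nonneg 2,
      Real.one_le_sqrt.mpr (by norm_num : (1:ℝ) ≤ 2)]
  set ξ₀ : Plane := (WithLp.equiv 2 (Fin 2 → ℝ)).symm ![s, s] with hξ₀
  have happ : ∀ i : Fin 2, ξ₀ i = s := by
    intro i; rw [hξ₀]; fin_cases i <;> simp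
  have hnorm : ‖ξ₀‖ = 1 := by
    rw [EuclideanSpace.norm_eq]
    rw [Fin.sum_univ_two, happ 0, happ 1]
    rw [Real.norm_eq_abs, _root_.sq_abs, hs2]
    norm_num
  have hne : ξ₀ ≠ 0 := by
    intro h
    rw [h, norm_zero] at hnorm; norm_num at hnorm
  have hsum := (hφ0.partition ξ₀ hne).mapL Complex.reCLM
  simp only [Complex.reCLM_apply, Complex.one_re] at hsum
  set g : ℤ → ℝ := fun j => (FT φ0 ((2:ℝ)^(-j) • ξ₀)).re with hg
  have hzero : ∀ j : ℤ, j ∉ ({-1, 0, 1} : Finset ℤ) → g j = 0 := by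
    intro j hj
    by_contra h
    have hFT : FT φ0 ((2:ℝ)^(-j) • ξ₀) ≠ 0 := by
      intro h0; rw [hg] at h; simp only at h; rw [h0] at h; simp at h
    obtain ⟨h1, h2⟩ := hφ0.support _ hFT
    rw [norm_smul, hnorm, mul_one, Real.norm_eq_abs,
      abs_of_pos (zpow_pos (by norm_num) _)] at h1 h2
    have e1 : ((2:ℝ)^(-1:ℤ) : ℝ) ≤ (2:ℝ)^(-j) := by norm_num at h1 ⊢; linarith
    have e2 : ((2:ℝ)^(-j) : ℝ) ≤ (2:ℝ)^(1:ℤ) := by norm_num at h2 ⊢; linarith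
    have j1 : (-1:ℤ) ≤ -j := by
      exact_mod_cast (zpow_le_zpow_iff_right₀ (by norm_num : (1:ℝ) < 2)).mp e1
    have j2 : (-j:ℤ) ≤ 1 := by
      exact_mod_cast (zpow_le_zpow_iff_right₀ (by norm_num : (1:ℝ) < 2)).mp e2
    simp only [Finset.mem_insert, Finset.mem_singleton] at hj
    omega
  have hsum2 : HasSum g (∑ j ∈ ({-1, 0, 1} : Finset ℤ), g j) :=
    hasSum_sum_of_ne_finset_zero hzero
  have hval : (∑ j ∈ ({-1, 0, 1} : Finset ℤ), g j) = 1 := hsum2.unique hsum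
  have hsum3 : g (-1) + g 0 + g 1 = 1 := by
    rw [show ({-1, 0, 1} : Finset ℤ) = {-1} ∪ {0} ∪ {1} by decide] at hval
    rw [Finset.sum_union (by decide), Finset.sum_union (by decide)] at hval
    simpa using hval
  have key : ∃ j₀ ∈ ({-1, 0, 1} : Finset ℤ), 1/3 ≤ g j₀ := by
    by_contra h
    push_neg at h
    have h1 := h (-1) (by decide)
    have h2 := h 0 (by decide)
    have h3 := h 1 (by decide)
    linarith
  obtain ⟨j₀, hj₀, hgj₀⟩ := key
  refine ⟨(2:ℝ)^(-j₀) • ξ₀, ?_, ?_, ?_, hgj₀⟩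
  · show (1:ℝ)/4 ≤ ((2:ℝ)^(-j₀) • ξ₀) 0
    rw [PiLp.smul_apply, happ 0, smul_eq_mul]
    fin_cases hj₀ <;> norm_num <;> linarith
  · show (1:ℝ)/4 ≤ ((2:ℝ)^(-j₀) • ξ₀) 1
    rw [PiLp.smul_apply, happ 1, smul_eq_mul]
    fin_cases hj₀ <;> norm_num <;> linarith
  · rw [norm_smul, hnorm, mul_one, Real.norm_eq_abs,
      abs_of_pos (zpow_pos (by norm_num) _)]
    fin_cases hj₀ <;> norm_num

set_option maxHeartbeats 3000000 in
/-- Gaussian-smoothed lower bound on the Fourier side: there is `c > 0`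
(depending only on `φ₀`) such that for all `ψ` satisfying (Ψ), `j ≤ -2` and
`2^{j-1} ≤ |ξ| ≤ 2^{j+1}`,
`(4π 2^{2j})⁻¹ ∫ exp(-|ξ-η|²/(4·2^{2j})) φ̂₀(2^{-j}η)(1-η₂²/|η|²)(η₂²/|η|³)(ψ̂*ψ̂)(η) dη
  ≥ c 2^{-j}`. -/
theorem gaussian_smoothed_lower_bound
    (φ0 : 𝓢(Plane, ℂ)) (hφ0 : IsLP φ0) :
    ∃ c : ℝ, 0 < c ∧ ∀ ψ : 𝓢(Plane, ℂ), IsPsi ψ → ∀ j : ℤ, j ≤ -2 →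
      ∀ ξ : Plane, (2:ℝ)^(j-1) ≤ ‖ξ‖ → ‖ξ‖ ≤ (2:ℝ)^(j+1) →
        c * (2:ℝ)^(-j) ≤
          (4 * Real.pi * (2:ℝ)^(2*j))⁻¹ *
            ∫ η : Plane,
              Real.exp (-‖ξ - η‖^2 / (4 * (2:ℝ)^(2*j)))
                * (FT φ0 ((2:ℝ)^(-j) • η)).re
                * (1 - (η 1)^2 / ‖η‖^2) * ((η 1)^2 / ‖η‖^3)
                * (∫ θ : Plane, FT ψ (η - θ) * FT ψ θ).re := by
  obtain ⟨p, hp0, hp1, hpn, hpre⟩ := exists_good_point φ0 hφ0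
  have cont : Continuous fun q : Plane => (FT φ0 q).re :=
    Complex.continuous_re.comp (FT_continuous φ0)
  have hU : IsOpen {q : Plane | 1/6 < (FT φ0 q).re} := isOpen_lt continuous_const cont
  have hpU : p ∈ {q : Plane | 1/6 < (FT φ0 q).re} := by
    simp only [Set.mem_setOf_eq]; linarith
  obtain ⟨ε, hε, hball⟩ := Metric.isOpen_iff.mp hU p hpU
  set r : ℝ := min ε (1/8) with hr
  clear_value r
  have hr0 : 0 < r := by rw [hr]; exact lt_min hε (by norm_num)
  have hr8 : r ≤ 1/8 := by rw [hr]; exact min_le_right _ _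
  have hballr : ∀ q : Plane, dist q p < r → 1/6 ≤ (FT φ0 q).re := by
    intro q hq
    rw [hr] at hq
    exact le_of_lt (hball (Metric.mem_ball.mpr (lt_of_lt_of_le hq (min_le_left _ _))))
  set V : ℝ := (volume (Metric.ball (0:Plane) (1/8))).toReal with hV
  clear_value V
  have hV0 : 0 < V := by rw [hV]; exact vol_ball_pos _ _ (by norm_num)
  set M : ℝ := (volume (Metric.closedBall (0:Plane) 2)).toReal with hM
  clear_value M
  have hM0 : 0 ≤ M := by rw [hM]; exact ENNReal.toReal_nonneg
  set K : ℝ := Real.exp (-(25/4)) * (1/6) * (1/576) * (1/1728) * V with hK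
  clear_value K
  have hK0 : 0 < K := by rw [hK]; exact mul_pos (by positivity) hV0
  refine ⟨K * r^2 / 4, by positivity, ?_⟩
  intro ψ hψ j hj ξ hξlo hξhi
  set T : ℝ := (2:ℝ)^j with hT
  clear_value T
  have hT0 : 0 < T := by rw [hT]; exact zpow_pos (by norm_num) j
  have hT4 : T ≤ 1/4 := by
    calc T ≤ (2:ℝ)^(-2:ℤ) := by
          rw [hT]
          exact (zpow_le_zpow_iff_right₀ (by norm_num : (1:ℝ) < 2)).mpr hj
    _ = 1/4 := by norm_num
  have h2j : (2:ℝ)^(2*j) = T^2 := by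
    rw [hT, mul_comm, zpow_mul]; norm_cast
  have hmj : (2:ℝ)^(-j) = T⁻¹ := by rw [hT, zpow_neg]
  have hξlo' : T/2 ≤ ‖ξ‖ := by
    have : (2:ℝ)^(j-1) = T/2 := by
      rw [hT, zpow_sub₀ (by norm_num : (2:ℝ) ≠ 0)]; norm_num
    linarith [hξlo, this ▸ hξlo]
  have hξhi' : ‖ξ‖ ≤ 2*T := by
    have e : (2:ℝ)^(j+1) = 2*T := by
      rw [hT, zpow_add₀ (by norm_num : (2:ℝ) ≠ 0)]; ring
    rw [e] at hξhi; exact hξhi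
  set f : Plane → ℝ := fun η =>
    Real.exp (-‖ξ - η‖^2 / (4 * (2:ℝ)^(2*j)))
      * (FT φ0 ((2:ℝ)^(-j) • η)).re
      * (1 - (η 1)^2 / ‖η‖^2) * ((η 1)^2 / ‖η‖^3)
      * (∫ θ : Plane, FT ψ (η - θ) * FT ψ θ).re with hfdef
  clear_value f
  have hAle1 : ∀ η : Plane, (η 1)^2 / ‖η‖^2 ≤ 1 := by
    intro η
    rcases eq_or_ne η 0 with h | h
    · simp [h]
    · have hn : 0 < ‖η‖ := norm_pos_iff.mpr h
      rw [div_le_one (by positivity)]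
      nlinarith [plane_norm_sq η, sq_nonneg (η 0)]
  have hA0 : ∀ η : Plane, 0 ≤ 1 - (η 1)^2 / ‖η‖^2 := fun η => by linarith [hAle1 η]
  have hB0 : ∀ η : Plane, 0 ≤ (η 1)^2 / ‖η‖^3 := fun η => by positivity
  have hexple1 : ∀ η : Plane, Real.exp (-‖ξ - η‖^2 / (4 * (2:ℝ)^(2*j))) ≤ 1 := by
    intro η
    rw [Real.exp_le_one_iff]
    apply div_nonpos_of_nonpos_of_nonneg
    · simp [sq_nonneg]
    · positivity
  have hfnonneg : ∀ η : Plane, 0 ≤ f η := by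
    intro η
    rw [hfdef]
    exact mul_nonneg (mul_nonneg (mul_nonneg (mul_nonneg (Real.exp_pos _).le
      (hφ0.nonneg _)) (hA0 η)) (hB0 η)) (conv_nonneg hψ η)
  have hmeas : AEStronglyMeasurable f volume := by
    rw [hfdef]
    apply Measurable.aestronglyMeasurable
    have m1 : Measurable fun η : Plane => Real.exp (-‖ξ - η‖^2 / (4 * (2:ℝ)^(2*j))) :=
      (Real.continuous_exp.comp
        ((((continuous_const.sub continuous_id).norm.pow 2).neg).div_const _)).measurable
    have m2 : Measurable fun η : Plane => (FT φ0 ((2:ℝ)^(-j) • η)).re :=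
      (cont.comp (continuous_const_smul _)).measurable
    have mapp : Measurable fun η : Plane => (η 1)^2 :=
      ((plane_apply_continuous 1).pow 2).measurable
    have mn2 : Measurable fun η : Plane => ‖η‖^2 := (continuous_norm.pow 2).measurable
    have mn3 : Measurable fun η : Plane => ‖η‖^3 := (continuous_norm.pow 3).measurable
    have m3 : Measurable fun η : Plane => 1 - (η 1)^2 / ‖η‖^2 :=
      measurable_const.sub (mapp.div mn2)
    have m4 : Measurable fun η : Plane => (η 1)^2 / ‖η‖^3 := mapp.div mn3
    have m5 : Measurable fun η : Plane => (∫ θ : Plane, FT ψ (η - θ) * FT ψ θ).re :=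
      (conv_re_measurable hψ).measurable
    exact ((((m1.mul m2).mul m3).mul m4).mul m5)
  have hsupp : ∀ η : Plane, FT φ0 ((2:ℝ)^(-j) • η) ≠ 0 → T/2 ≤ ‖η‖ ∧ ‖η‖ ≤ 2*T := by
    intro η h
    obtain ⟨h1, h2⟩ := hφ0.support _ h
    rw [norm_smul, Real.norm_eq_abs, hmj, abs_of_pos (inv_pos.mpr hT0)] at h1 h2
    have e : T⁻¹ * ‖η‖ = ‖η‖ / T := by ring
    rw [e, le_div_iff₀ hT0] at h1
    rw [e, div_le_iff₀ hT0] at h2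
    exact ⟨by linarith, by linarith⟩
  have hbound : ∀ η : Plane,
      f η ≤ (Metric.closedBall (0:Plane) (2*T)).indicator (fun _ => (2/T)*M) η := by
    intro η
    by_cases h : FT φ0 ((2:ℝ)^(-j) • η) = 0
    · have hz : f η = 0 := by
        rw [hfdef]
        simp only [h, Complex.zero_re, mul_zero, zero_mul]
      rw [hz]
      exact Set.indicator_nonneg (fun _ _ => mul_nonneg (div_nonneg (by norm_num) hT0.le) hM0) η
    · obtain ⟨h1, h2⟩ := hsupp η h
      have hmem : η ∈ Metric.closedBall (0:Plane) (2*T) := by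
        rw [Metric.mem_closedBall, dist_zero_right]; linarith
      rw [Set.indicator_of_mem hmem]
      have hηpos : 0 < ‖η‖ := lt_of_lt_of_le (by positivity) h1
      have hBle : (η 1)^2 / ‖η‖^3 ≤ 2/T := by
        rw [div_le_div_iff₀ (pow_pos hηpos 3) hT0]
        have e1 : (η 1)^2 ≤ ‖η‖^2 := by
          nlinarith [plane_norm_sq η, sq_nonneg (η 0)]
        have e2 : T ≤ 2*‖η‖ := by linarith
        calc (η 1)^2 * T ≤ ‖η‖^2 * (2*‖η‖) :=
              mul_le_mul e1 e2 hT0.le (sq_nonneg _)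
        _ = 2 * ‖η‖^3 := by ring
      have heA : Real.exp (-‖ξ - η‖^2 / (4 * (2:ℝ)^(2*j)))
          * (FT φ0 ((2:ℝ)^(-j) • η)).re * (1 - (η 1)^2 / ‖η‖^2) ≤ 1 := by
        have e1 := hexple1 η
        have e2 := hφ0.le_one ((2:ℝ)^(-j) • η)
        have e3 := hAle1 η
        have n1 := (Real.exp_pos (-‖ξ - η‖^2 / (4 * (2:ℝ)^(2*j)))).le
        have n2 := hφ0.nonneg ((2:ℝ)^(-j) • η)
        have n3 := hA0 η
        have hab : Real.exp (-‖ξ - η‖^2 / (4 * (2:ℝ)^(2*j)))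
            * (FT φ0 ((2:ℝ)^(-j) • η)).re ≤ 1 := by
          nlinarith [mul_le_mul e1 e2 n2 (by norm_num : (0:ℝ) ≤ 1)]
        have hab0 : 0 ≤ Real.exp (-‖ξ - η‖^2 / (4 * (2:ℝ)^(2*j)))
            * (FT φ0 ((2:ℝ)^(-j) • η)).re := mul_nonneg n1 n2
        have hq0 : 0 ≤ (η 1)^2 / ‖η‖^2 := by positivity
        have e3' : 1 - (η 1)^2 / ‖η‖^2 ≤ 1 := by linarith
        nlinarith [mul_le_mul hab e3' n3 (by norm_num : (0:ℝ) ≤ 1)]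
      have hce : (∫ θ : Plane, FT ψ (η - θ) * FT ψ θ).re ≤ M := by rw [hM]; exact conv_upper hψ η
      have hfe : f η = (Real.exp (-‖ξ - η‖^2 / (4 * (2:ℝ)^(2*j)))
          * (FT φ0 ((2:ℝ)^(-j) • η)).re * (1 - (η 1)^2 / ‖η‖^2))
          * (((η 1)^2 / ‖η‖^3) * (∫ θ : Plane, FT ψ (η - θ) * FT ψ θ).re) := by
        rw [hfdef]; ring
      rw [hfe]
      calc (Real.exp (-‖ξ - η‖^2 / (4 * (2:ℝ)^(2*j)))
          * (FT φ0 ((2:ℝ)^(-j) • η)).re * (1 - (η 1)^2 / ‖η‖^2))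
          * (((η 1)^2 / ‖η‖^3) * (∫ θ : Plane, FT ψ (η - θ) * FT ψ θ).re)
          ≤ 1 * ((2/T) * M) := by
            apply mul_le_mul heA
              (mul_le_mul hBle hce (conv_nonneg hψ η) (by positivity))
              (mul_nonneg (hB0 η) (conv_nonneg hψ η))
              (by norm_num)
      _ = (2/T) * M := one_mul _
  have hint : Integrable f := by
    apply Integrable.mono'
      (g := (Metric.closedBall (0:Plane) (2*T)).indicator (fun _ => (2/T)*M))
    · rw [integrable_indicator_iff measurableSet_closedBall]
      exact integrableOn_const measure_closedBall_lt_top.ne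
    · exact hmeas
    · filter_upwards with η
      rw [Real.norm_eq_abs, _root_.abs_of_nonneg (hfnonneg η)]
      exact hbound η
  -- lower bound on the region S
  have hSvol : (volume (Metric.ball (T • p) (T*r))).toReal = Real.pi * (T*r)^2 :=
    vol_ball_toReal _ _ (mul_nonneg hT0.le hr0.le)
  have hflow : ∀ η ∈ Metric.ball (T • p) (T*r), K/T ≤ f η := by
    intro η hη
    rw [Metric.mem_ball] at hη
    have hq : dist ((2:ℝ)^(-j) • η) p < r := by
      rw [hmj, dist_eq_norm]
      have e : T⁻¹ • η - p = T⁻¹ • (η - T • p) := by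
        rw [smul_sub, smul_smul, inv_mul_cancel₀ hT0.ne', one_smul]
      rw [e, norm_smul, Real.norm_eq_abs, abs_of_pos (inv_pos.mpr hT0)]
      rw [dist_eq_norm] at hη
      calc T⁻¹ * ‖η - T • p‖ < T⁻¹ * (T*r) := by
            exact mul_lt_mul_of_pos_left hη (inv_pos.mpr hT0)
      _ = r := by rw [← mul_assoc, inv_mul_cancel₀ hT0.ne', one_mul]
    have hφre : 1/6 ≤ (FT φ0 ((2:ℝ)^(-j) • η)).re := hballr _ hq
    have hcomp : ∀ i : Fin 2, 1/4 ≤ p i → T/8 ≤ η i := by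
      intro i hpi
      have habs : |((2:ℝ)^(-j) • η - p) i| ≤ ‖(2:ℝ)^(-j) • η - p‖ :=
        plane_abs_apply_le _ i
      rw [← dist_eq_norm] at habs
      have h8 : |((2:ℝ)^(-j) • η - p) i| < 1/8 :=
        lt_of_le_of_lt habs (lt_of_lt_of_le hq hr8)
      have e : ((2:ℝ)^(-j) • η - p) i = T⁻¹ * η i - p i := by
        rw [hmj]; simp [PiLp.sub_apply, PiLp.smul_apply, smul_eq_mul]
      rw [e, abs_lt] at h8
      have : 1/8 ≤ T⁻¹ * η i := by linarith
      calc T/8 = T * (1/8) := by ring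
      _ ≤ T * (T⁻¹ * η i) := mul_le_mul_of_nonneg_left this hT0.le
      _ = η i := by rw [← mul_assoc, mul_inv_cancel₀ hT0.ne', one_mul]
    have hc0 : T/8 ≤ η 0 := hcomp 0 hp0
    have hc1 : T/8 ≤ η 1 := hcomp 1 hp1
    have hηhi : ‖η‖ ≤ 3*T := by
      have e1 : ‖T • p‖ ≤ 2*T := by
        rw [norm_smul, Real.norm_eq_abs, abs_of_pos hT0]; nlinarith
      have e2 : ‖η - T • p‖ < T * r := by rw [← dist_eq_norm]; exact hη
      calc ‖η‖ = ‖T • p + (η - T • p)‖ := by rw [add_sub_cancel]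
      _ ≤ ‖T • p‖ + ‖η - T • p‖ := norm_add_le _ _
      _ ≤ 2*T + T*r := by linarith
      _ ≤ 3*T := by nlinarith
    have hη0 : 0 < ‖η‖ := by
      have := plane_abs_apply_le η 0
      have h8 : 0 < T/8 := by positivity
      calc (0:ℝ) < T/8 := h8
      _ ≤ η 0 := hc0
      _ ≤ |η 0| := le_abs_self _
      _ ≤ ‖η‖ := plane_abs_apply_le η 0
    have hsq := plane_norm_sq η
    have hn2 : ‖η‖^2 ≤ 9*T^2 := by nlinarith [norm_nonneg η]
    have h0sq : T^2/64 ≤ (η 0)^2 := by nlinarith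
    have h1sq : T^2/64 ≤ (η 1)^2 := by nlinarith
    have hA : 1/576 ≤ 1 - (η 1)^2 / ‖η‖^2 := by
      have e : 1 - (η 1)^2 / ‖η‖^2 = (η 0)^2 / ‖η‖^2 := by
        field_simp [hη0.ne']
        linarith
      rw [e, le_div_iff₀ (pow_pos hη0 2)]
      linarith
    have hB : 1/(1728*T) ≤ (η 1)^2 / ‖η‖^3 := by
      have hn3 : ‖η‖^3 ≤ 27*T^3 := by
        calc ‖η‖^3 = ‖η‖^2 * ‖η‖ := by ring
        _ ≤ (9*T^2) * (3*T) :=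
            mul_le_mul hn2 hηhi (norm_nonneg η) (by positivity)
        _ = 27*T^3 := by ring
      rw [le_div_iff₀ (pow_pos hη0 3)]
      have h1728 : (0:ℝ) ≤ 1/(1728*T) := div_nonneg (by norm_num) (by linarith)
      calc 1/(1728*T) * ‖η‖^3 ≤ 1/(1728*T) * (27*T^3) :=
            mul_le_mul_of_nonneg_left hn3 h1728
      _ = T^2/64 := by field_simp [hT0.ne']; ring
      _ ≤ (η 1)^2 := h1sq
    have hexp : Real.exp (-(25/4)) ≤ Real.exp (-‖ξ - η‖^2 / (4 * (2:ℝ)^(2*j))) := by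
      apply Real.exp_le_exp.mpr
      rw [h2j]
      have hd : ‖ξ - η‖ ≤ 5*T := by
        calc ‖ξ - η‖ ≤ ‖ξ‖ + ‖η‖ := norm_sub_le _ _
        _ ≤ 5*T := by linarith
      have hd2 : ‖ξ - η‖^2 ≤ 25*T^2 := by nlinarith [norm_nonneg (ξ - η)]
      rw [neg_div, neg_le_neg_iff, div_le_div_iff₀ (by nlinarith : (0:ℝ) < 4*T^2) (by norm_num : (0:ℝ) < 4)]
      nlinarith
    have hconvlow : V ≤ (∫ θ : Plane, FT ψ (η - θ) * FT ψ θ).re := by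
      rw [hV]
      apply conv_lower hψ
      calc ‖η‖ ≤ 3*T := hηhi
      _ ≤ 7/8 := by linarith
    have key : Real.exp (-(25/4)) * (1/6) * (1/576) * (1/(1728*T)) * V ≤ f η := by
      rw [hfdef]
      apply mul_le_mul _ hconvlow hV0.le
      · exact mul_nonneg (mul_nonneg (mul_nonneg (Real.exp_pos _).le
          (hφ0.nonneg _)) (hA0 η)) (hB0 η)
      apply mul_le_mul _ hB (div_nonneg (by norm_num) (by nlinarith))
      · exact mul_nonneg (mul_nonneg (Real.exp_pos _).le (hφ0.nonneg _)) (hA0 η)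
      apply mul_le_mul _ hA (by norm_num)
      · exact mul_nonneg (Real.exp_pos _).le (hφ0.nonneg _)
      exact mul_le_mul hexp hφre (by norm_num) (Real.exp_pos _).le
    have keq : Real.exp (-(25/4)) * (1/6) * (1/576) * (1/(1728*T)) * V = K/T := by
      rw [hK]; field_simp [hT0.ne']; try ring
    linarith [keq ▸ key]
  have hS1 : K/T * (volume (Metric.ball (T • p) (T*r))).toReal
      ≤ ∫ η in Metric.ball (T • p) (T*r), f η :=
    by have := setIntegral_ge_of_const_le_real measurableSet_ball measure_ball_lt_top.ne hflow
         hint.integrableOn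
       exact this
  have hS2 : ∫ η in Metric.ball (T • p) (T*r), f η ≤ ∫ η, f η := by
    apply setIntegral_le_integral hint
    filter_upwards with η
    exact hfnonneg η
  have hIlow : K * Real.pi * T * r^2 ≤ ∫ η, f η := by
    have e : K/T * (Real.pi * (T*r)^2) = K * Real.pi * T * r^2 := by
      field_simp [hT0.ne']
    rw [hSvol] at hS1
    linarith [e ▸ hS1]
  rw [hmj, h2j]
  have hc1 : (4*Real.pi*T^2)⁻¹ * (K*Real.pi*T*r^2) = K*r^2/4 * T⁻¹ := by
    rw [mul_inv, mul_inv]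
    field_simp [hT0.ne', Real.pi_ne_zero]
  calc K*r^2/4 * T⁻¹ = (4*Real.pi*T^2)⁻¹ * (K*Real.pi*T*r^2) := hc1.symm
  _ ≤ (4*Real.pi*T^2)⁻¹ * ∫ η, f η := by
      apply mul_le_mul_of_nonneg_left hIlow
      rw [inv_nonneg]
      nlinarith [Real.pi_pos, sq_nonneg T]

end
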